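/- Let Σ ⊆ ℝⁿ be a compact set with ℋ^m(Σ) < ∞ such that there exist R > 0 and C > 0 with β̄_m(x,r) ≤ C·r for every x ∈ Σ and every r ∈ (0,R]. Then the discrete curvature K is uniformly bounded on Σ^{m+2}, i.e. sup{ K(x₀,…,x_{m+1}) : x₀,…,x_{m+1} ∈ Σ } < ∞, and consequently the p-energy E_p(Σ) is finite for every p > 0. -/

import Mathlib

open Metric MeasureTheory Filter
open scoped RealInnerProductSpace ENNReal NNReal

noncomputable section

abbrev Euc (n : ℕ) := EuclideanSpace ℝ (Fin n)

variable {n : ℕ}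

/-- Orthogonal projection onto a subspace, as a continuous linear map on the whole space. -/
noncomputable def projCLM (U : Submodule ℝ (Euc n)) : Euc n →L[ℝ] Euc n :=
  U.subtypeL.comp U.orthogonalProjectionOnto

/-- Orthogonal projection onto the orthogonal complement. -/
noncomputable def QCLM (U : Submodule ℝ (Euc n)) : Euc n →L[ℝ] Euc n :=
  projCLM Uᗮ

/-- The metric on the Grassmannian: operator norm distance of orthogonal projections. -/
noncomputable def dG (U V : Submodule ℝ (Euc n)) : ℝ :=
  ‖projCLM U - projCLM V‖

/-- The cone with axis `Hᗮ` and "angle" `δ`. -/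
def angCone (δ : ℝ) (H : Submodule ℝ (Euc n)) : Set (Euc n) :=
  {x | δ * ‖x‖ ≤ ‖QCLM H x‖}

/-- The shell (n-annulus) of radii `r` and `R`. -/
def shell (r R : ℝ) : Set (Euc n) :=
  Metric.ball (0 : Euc n) R \ Metric.closedBall (0 : Euc n) r

/-- Conical cap: intersection of a cone and a shell. -/
def conicalCap (δ : ℝ) (H : Submodule ℝ (Euc n)) (r R : ℝ) : Set (Euc n) :=
  angCone δ H ∩ shell r R

/-- Symmetrized Hausdorff-type distance: sum of the two one-sided deviations. -/
noncomputable def hDistSum (A B : Set (Euc n)) : ℝ :=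
  (⨆ y : A, Metric.infDist (y : Euc n) B) + (⨆ y : B, Metric.infDist (y : Euc n) A)

/-- Jones β-number (closed-ball version). -/
noncomputable def betaBar (m : ℕ) (S : Set (Euc n)) (x : Euc n) (r : ℝ) : ℝ :=
  (1/r) * ⨅ H : {H : Submodule ℝ (Euc n) // Module.finrank ℝ H = m},
    ⨆ z : ↥(S ∩ Metric.closedBall x r), ‖QCLM H.1 ((z : Euc n) - x)‖

/-- Jones β-number (open-ball version). -/
noncomputable def betaOpen (m : ℕ) (S : Set (Euc n)) (x : Euc n) (r : ℝ) : ℝ :=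
  (1/r) * ⨅ H : {H : Submodule ℝ (Euc n) // Module.finrank ℝ H = m},
    ⨆ z : ↥(S ∩ Metric.ball x r), ‖QCLM H.1 ((z : Euc n) - x)‖

/-- Reifenberg θ-number (closed-ball version). -/
noncomputable def thetaBar (m : ℕ) (S : Set (Euc n)) (x : Euc n) (r : ℝ) : ℝ :=
  (1/r) * ⨅ H : {H : Submodule ℝ (Euc n) // Module.finrank ℝ H = m},
    hDistSum (S ∩ Metric.closedBall x r)
      ((fun v => x + v) '' (H.1 : Set (Euc n)) ∩ Metric.closedBall x r)

/-- Reifenberg θ-number (open-ball version). -/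
noncomputable def thetaOpen (m : ℕ) (S : Set (Euc n)) (x : Euc n) (r : ℝ) : ℝ :=
  (1/r) * ⨅ H : {H : Submodule ℝ (Euc n) // Module.finrank ℝ H = m},
    hDistSum (S ∩ Metric.ball x r)
      ((fun v => x + v) '' (H.1 : Set (Euc n)) ∩ Metric.ball x r)

/-- Discrete Menger-type curvature of an `(m+2)`-tuple of points. -/
noncomputable def discCurv (m : ℕ) (x : Fin (m+2) → Euc n) : ℝ :=
  (μH[((m : ℝ) + 1)] (convexHull ℝ (Set.range x))).toReal / Metric.diam (Set.range x) ^ (m+2)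

/-- Iterated lower integral over `k` copies of a measure. -/
noncomputable def multiLIntegral (μ : Measure (Euc n)) :
    (k : ℕ) → ((Fin k → Euc n) → ℝ≥0∞) → ℝ≥0∞
  | 0, f => f Fin.elim0
  | k+1, f => ∫⁻ x, multiLIntegral μ k (fun v => f (Fin.cons x v)) ∂μ

/-- The `p`-energy of a set: the integral of `K^p` over `(m+2)`-tuples of points of `S`,
with respect to the `m`-dimensional Hausdorff measure restricted to `S`. -/
noncomputable def energy (m : ℕ) (p : ℝ) (S : Set (Euc n)) : ℝ≥0∞ :=
  multiLIntegral ((μH[(m : ℝ)]).restrict S) (m+2) fun x => ENNReal.ofReal (discCurv m x ^ p)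

/-- The class `V_k(η,d)` of `(η,d)`-voluminous `(k+1)`-simplices. -/
def IsVol (k : ℕ) (η d : ℝ) (x : Fin (k+2) → Euc n) : Prop :=
  (∃ c : Euc n, convexHull ℝ (Set.range x) ⊆ Metric.closedBall c d) ∧
  ENNReal.ofReal ((η * d) ^ k) ≤
    μH[(k : ℝ)] (convexHull ℝ (Set.range fun i : Fin (k+1) => x i.castSucc)) ∧
  η * d ≤ Metric.infDist (x (Fin.last (k+1)))
    (affineSpan ℝ (Set.range fun i : Fin (k+1) => x i.castSucc) : Set (Euc n))

/-- Pseudo-distance between two simplices given by vertex tuples. -/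
noncomputable def simplexDist (k : ℕ) (x y : Fin (k+2) → Euc n) : ℝ :=
  ⨅ σ : Equiv.Perm (Fin (k+2)), ⨆ i, dist (x i) (y (σ i))

/-- Best approximating `m`-planes for `S` in the closed ball `B̄(x,r)`. -/
def BAP (m : ℕ) (S : Set (Euc n)) (x : Euc n) (r : ℝ) : Set (Submodule ℝ (Euc n)) :=
  {H | Module.finrank ℝ H = m ∧
    hDistSum (S ∩ Metric.closedBall x r)
      ((fun v => x + v) '' (H : Set (Euc n)) ∩ Metric.closedBall x r) ≤ r * thetaBar m S x r}

/-- `m`-fine sets with constants `A`, `R`, `M`. -/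
def IsFine (m : ℕ) (S : Set (Euc n)) (A R M : ℝ) : Prop :=
  IsCompact S ∧ 0 < A ∧ 0 < R ∧ 2 ≤ M ∧
  (∀ x ∈ S, ∀ r : ℝ, 0 < r → r ≤ R →
    ENNReal.ofReal (A * r ^ m) ≤ μH[(m : ℝ)] (S ∩ Metric.ball x r)) ∧
  (∀ x ∈ S, ∀ r : ℝ, 0 < r → r ≤ R → thetaBar m S x r ≤ M * betaBar m S x r)

/-- `T` is the (m-dimensional) tangent plane of `S` at `x`: the limit in the Grassmannian
metric of best approximating planes as the scale tends to `0`. -/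
def IsTangentAt (m : ℕ) (S : Set (Euc n)) (x : Euc n) (T : Submodule ℝ (Euc n)) : Prop :=
  Module.finrank ℝ T = m ∧
  ∀ ε > 0, ∃ r₀ > 0, ∀ r : ℝ, 0 < r → r ≤ r₀ → ∀ H ∈ BAP m S x r, dG T H ≤ ε


/-! ### Auxiliary lemmas -/

open Module in
lemma norm_projCLM_le {n : ℕ} (U : Submodule ℝ (Euc n)) (y : Euc n) :
    ‖projCLM U y‖ ≤ ‖y‖ := by
  have h1 : ‖projCLM U y‖ = ‖U.orthogonalProjectionOnto y‖ := rfl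
  rw [h1]
  calc ‖U.orthogonalProjectionOnto y‖ ≤ ‖(U.orthogonalProjectionOnto : Euc n →L[ℝ] U)‖ * ‖y‖ :=
        (U.orthogonalProjectionOnto).le_opNorm y
    _ ≤ 1 * ‖y‖ := by
        gcongr
        exact Submodule.orthogonalProjectionOnto_norm_le U
    _ = ‖y‖ := one_mul _

lemma norm_QCLM_le {n : ℕ} (U : Submodule ℝ (Euc n)) (y : Euc n) :
    ‖QCLM U y‖ ≤ ‖y‖ := norm_projCLM_le Uᗮ y

open Module in
lemma exists_superspace {n : ℕ} (V : Submodule ℝ (Euc n)) (k : ℕ)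
    (h1 : finrank ℝ V ≤ k) (h2 : k ≤ n) : ∃ W, V ≤ W ∧ finrank ℝ W = k := by
  induction k with
  | zero => exact ⟨V, le_rfl, Nat.le_zero.mp h1⟩
  | succ k ih =>
    by_cases h : finrank ℝ V = k + 1
    · exact ⟨V, le_rfl, h⟩
    · obtain ⟨W, hVW, hWk⟩ := ih (by omega) (by omega)
      have hne : W ≠ ⊤ := by
        intro ht
        rw [ht, finrank_top, finrank_euclideanSpace_fin] at hWk
        omega
      have hex : ¬ ∀ y, y ∈ W := fun hall => hne (Submodule.eq_top_iff'.mpr hall)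
      push_neg at hex
      obtain ⟨x, hx⟩ := hex
      have hx0 : x ≠ 0 := fun h0 => hx (h0 ▸ W.zero_mem)
      refine ⟨W ⊔ (ℝ ∙ x), le_trans hVW le_sup_left, ?_⟩
      have hdisj : W ⊓ (ℝ ∙ x) = ⊥ :=
        disjoint_iff.mp (Submodule.disjoint_span_singleton.mpr (fun h => absurd h hx))
      have := Submodule.finrank_sup_add_finrank_inf_eq W (ℝ ∙ x)
      rw [hdisj, finrank_bot, finrank_span_singleton hx0, hWk] at this
      omega

open scoped RealInnerProductSpace in
lemma box_bound {n k : ℕ} (u : Fin k → Euc n) (hu : Orthonormal ℝ u) (x₀ : Euc n)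
    (r : Fin k → ℝ) (hr : ∀ i, 0 ≤ r i) (s : Set (Euc n))
    (h1 : ∀ z ∈ s, z - x₀ ∈ Submodule.span ℝ (Set.range u))
    (h2 : ∀ z ∈ s, ∀ i, |⟪u i, z - x₀⟫| ≤ r i) :
    μH[(k:ℝ)] s ≤ ENNReal.ofReal ((k:ℝ)^k * ∏ i, (2 * r i)) := by
  set φ : (Fin k → ℝ) → Euc n := fun c => x₀ + ∑ i, c i • u i with hφ
  have lip : LipschitzWith (k : ℝ≥0) φ := by
    apply LipschitzWith.of_dist_le_mul
    intro a b
    have h : φ a - φ b = ∑ i, (a i - b i) • u i := by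
      simp only [hφ, add_sub_add_left_eq_sub, ← Finset.sum_sub_distrib, sub_smul]
    rw [dist_eq_norm, h]
    calc ‖∑ i, (a i - b i) • u i‖ ≤ ∑ i, ‖(a i - b i) • u i‖ := norm_sum_le _ _
      _ ≤ ∑ _i : Fin k, dist a b := by
          apply Finset.sum_le_sum
          intro i _
          rw [norm_smul, hu.1 i, mul_one]
          rw [Real.norm_eq_abs, ← Real.dist_eq]
          exact dist_le_pi_dist a b i
      _ = k * dist a b := by simp [mul_comm]
  set box : Set (Fin k → ℝ) := Set.pi Set.univ (fun i => Set.Icc (-(r i)) (r i)) with hbox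
  have hsub : s ⊆ φ '' box := by
    intro z hz
    refine ⟨fun i => ⟪u i, z - x₀⟫, fun i _ => abs_le.mp (h2 z hz i), ?_⟩
    obtain ⟨a, ha⟩ := Submodule.mem_span_range_iff_exists_fun ℝ |>.mp (h1 z hz)
    have hcoord : ∀ j, ⟪u j, z - x₀⟫ = a j := fun j => by
      rw [← ha]; exact hu.inner_right_fintype a j
    simp only [hφ, hcoord]
    rw [ha]
    abel
  have hmeas : (μH[(k:ℝ)] : Measure (Fin k → ℝ)) = volume := by
    simpa using (hausdorffMeasure_pi_real (ι := Fin k))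
  calc μH[(k:ℝ)] s ≤ μH[(k:ℝ)] (φ '' box) := measure_mono hsub
    _ ≤ (k : ℝ≥0∞) ^ (k:ℝ) * μH[(k:ℝ)] box := by
        simpa using lip.hausdorffMeasure_image_le (d := (k:ℝ)) (Nat.cast_nonneg k) box
    _ = (k : ℝ≥0∞) ^ (k:ℝ) * ENNReal.ofReal (∏ i, (2 * r i)) := by
        rw [hmeas, hbox, volume_pi_pi]
        congr 1
        rw [ENNReal.ofReal_prod_of_nonneg (fun i _ => by have := hr i; linarith)]
        refine Finset.prod_congr rfl fun i _ => ?_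
        rw [Real.volume_Icc]
        norm_num [two_mul]
    _ ≤ ENNReal.ofReal ((k:ℝ)^k * ∏ i, (2 * r i)) := by
        rw [ENNReal.ofReal_mul (by positivity)]
        gcongr
        have hb : (((k:ℕ):ℝ≥0):ℝ≥0∞) ^ ((k:ℕ):ℝ) = ENNReal.ofReal ((k:ℝ)^k) := by
          rw [← Real.rpow_natCast (k:ℝ) k,
            ← ENNReal.ofReal_rpow_of_nonneg (Nat.cast_nonneg k) (Nat.cast_nonneg k)]
          congr 1
          simp [ENNReal.ofReal_natCast]
        exact le_of_eq hb

open Module in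
open scoped RealInnerProductSpace in
lemma hull_bound {n m : ℕ} (hmn : m < n) (x : Fin (m+2) → Euc n) (d δ : ℝ)
    (hd : 0 ≤ d) (hδ : 0 ≤ δ) (H : Submodule ℝ (Euc n)) (hH : finrank ℝ H = m)
    (hnorm : ∀ i, ‖x i - x 0‖ ≤ d) (hQ : ∀ i, ‖QCLM H (x i - x 0)‖ ≤ δ) :
    μH[((m:ℝ)+1)] (convexHull ℝ (Set.range x)) ≤
      ENNReal.ofReal ((((m:ℝ)+1))^(m+1) * ((2*d)^m * (2*δ))) := by
  classical
  set V := Submodule.span ℝ (Set.range fun i : Fin (m+1) => x i.succ - x 0) with hV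
  have hVrank : finrank ℝ V ≤ m + 1 := by
    have h := finrank_range_le_card (R := ℝ) (fun i : Fin (m+1) => x i.succ - x 0)
    simpa [Set.finrank] using h
  obtain ⟨W, hVW, hWrank⟩ := exists_superspace V (m+1) hVrank (by omega)
  have hxW : ∀ i, x i - x 0 ∈ W := by
    intro i
    induction i using Fin.cases with
    | zero => simp only [sub_self]; exact W.zero_mem
    | succ j => exact hVW (Submodule.subset_span ⟨j, rfl⟩)
  have horth : finrank ℝ H + finrank ℝ Hᗮ = n := by
    have := Submodule.finrank_add_finrank_orthogonal H
    rwa [finrank_euclideanSpace_fin] at this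
  have hsup : finrank ℝ ↥(W ⊔ Hᗮ) ≤ n := by
    have := Submodule.finrank_le (W ⊔ Hᗮ)
    rwa [finrank_euclideanSpace_fin] at this
  have hinf := Submodule.finrank_sup_add_finrank_inf_eq W Hᗮ
  have hinfpos : 0 < finrank ℝ ↥(W ⊓ Hᗮ) := by omega
  have hnebot : W ⊓ Hᗮ ≠ ⊥ := by
    intro hbot
    rw [hbot, finrank_bot] at hinfpos
    omega
  obtain ⟨w₀, hw₀mem, hw₀⟩ := Submodule.exists_mem_ne_zero_of_ne_bot hnebot
  set w : Euc n := ‖w₀‖⁻¹ • w₀ with hwdef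
  have hw1 : ‖w‖ = 1 := norm_smul_inv_norm hw₀
  have hwW : w ∈ W := W.smul_mem _ (Submodule.mem_inf.mp hw₀mem).1
  have hwH : w ∈ Hᗮ := Hᗮ.smul_mem _ (Submodule.mem_inf.mp hw₀mem).2
  have hcard : finrank ℝ ↥W = Fintype.card (Fin (m+1)) := by simp [hWrank]
  set w' : W := ⟨w, hwW⟩ with hw'
  have hvon : Orthonormal ℝ (Set.restrict {Fin.last m} (fun _ : Fin (m+1) => w')) := by
    constructor
    · intro i
      exact hw1
    · intro i j hij
      exfalso
      exact hij (Subtype.ext ((i.2 : i.1 ∈ ({Fin.last m} : Set _)).trans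
        ((j.2 : j.1 ∈ ({Fin.last m} : Set _)).symm)))
  obtain ⟨b, hb⟩ := hvon.exists_orthonormalBasis_extension_of_card_eq hcard
  have hblast : b (Fin.last m) = w' := hb _ rfl
  set u : Fin (m+1) → Euc n := fun i => ((b i : W) : Euc n) with hudef
  have hu : Orthonormal ℝ u := by
    constructor
    · intro i; exact b.orthonormal.1 i
    · intro i j hij; exact b.orthonormal.2 hij
  have hspan : Submodule.span ℝ (Set.range u) = W := by
    have h1 : Set.range u = W.subtype '' Set.range (⇑b) := by
      rw [← Set.range_comp]; rfl
    rw [h1, Submodule.span_image]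
    have h2 : Submodule.span ℝ (Set.range ⇑b) = ⊤ := by
      have := b.toBasis.span_eq
      rwa [b.coe_toBasis] at this
    rw [h2, Submodule.map_subtype_top]
  set C : Set (Euc n) := {z | (z - x 0 ∈ W) ∧ ‖z - x 0‖ ≤ d ∧ |⟪w, z - x 0⟫| ≤ δ} with hC
  have hCconv : Convex ℝ C := by
    intro z1 hz1 z2 hz2 a c ha hc hac
    have h' : a • x 0 + c • x 0 = x 0 := by rw [← add_smul, hac, one_smul]
    have key : (a • z1 + c • z2) - x 0 = a • (z1 - x 0) + c • (z2 - x 0) := by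
      calc a • z1 + c • z2 - x 0 = a • z1 + c • z2 - (a • x 0 + c • x 0) := by rw [h']
        _ = a • (z1 - x 0) + c • (z2 - x 0) := by rw [smul_sub, smul_sub]; abel
    refine ⟨?_, ?_, ?_⟩
    · rw [Set.mem_setOf_eq] at *
      rw [key]
      exact W.add_mem (W.smul_mem _ hz1.1) (W.smul_mem _ hz2.1)
    · rw [key]
      calc ‖a • (z1 - x 0) + c • (z2 - x 0)‖ ≤ ‖a • (z1 - x 0)‖ + ‖c • (z2 - x 0)‖ :=
            norm_add_le _ _
        _ = a * ‖z1 - x 0‖ + c * ‖z2 - x 0‖ := by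
            rw [norm_smul, norm_smul, Real.norm_eq_abs, Real.norm_eq_abs,
              abs_of_nonneg ha, abs_of_nonneg hc]
        _ ≤ a * d + c * d := by
            gcongr
            exacts [hz1.2.1, hz2.2.1]
        _ = d := by rw [← add_mul, hac, one_mul]
    · rw [key, inner_add_right, real_inner_smul_right, real_inner_smul_right]
      calc |a * ⟪w, z1 - x 0⟫ + c * ⟪w, z2 - x 0⟫|
          ≤ |a * ⟪w, z1 - x 0⟫| + |c * ⟪w, z2 - x 0⟫| := abs_add_le _ _
        _ = a * |⟪w, z1 - x 0⟫| + c * |⟪w, z2 - x 0⟫| := by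
            rw [abs_mul, abs_mul, abs_of_nonneg ha, abs_of_nonneg hc]
        _ ≤ a * δ + c * δ := by
            gcongr
            exacts [hz1.2.2, hz2.2.2]
        _ = δ := by rw [← add_mul, hac, one_mul]
  have hhull : convexHull ℝ (Set.range x) ⊆ C := by
    apply convexHull_min _ hCconv
    rintro - ⟨i, rfl⟩
    refine ⟨hxW i, hnorm i, ?_⟩
    set v := x i - x 0 with hvdef
    have hmem : v - QCLM H v ∈ H := by
      have h1 : v - (Hᗮ.orthogonalProjectionOnto v : Euc n) ∈ Hᗮᗮ :=
        Submodule.sub_starProjection_mem_orthogonal (K := Hᗮ) v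
      rw [Submodule.orthogonal_orthogonal] at h1
      exact h1
    have h0 : ⟪w, v - QCLM H v⟫ = 0 := Submodule.inner_left_of_mem_orthogonal hmem hwH
    rw [inner_sub_right] at h0
    have heq : ⟪w, v⟫ = ⟪w, QCLM H v⟫ := by linarith
    rw [heq]
    calc |⟪w, QCLM H v⟫| ≤ ‖w‖ * ‖QCLM H v‖ := abs_real_inner_le_norm _ _
      _ ≤ 1 * δ := by rw [hw1, one_mul, one_mul]; exact hQ i
      _ = δ := one_mul _
  set r : Fin (m+1) → ℝ := fun i => if i = Fin.last m then δ else d with hrdef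
  have hbb := box_bound u hu (x 0) r
    (fun i => by by_cases h : i = Fin.last m <;> simp [hrdef, h, hδ, hd])
    (convexHull ℝ (Set.range x))
    (fun z hz => by rw [hspan]; exact (hhull hz).1)
    (fun z hz i => by
      by_cases h : i = Fin.last m
      · subst h
        have : u (Fin.last m) = w := by simp only [hudef, hblast]; rfl
        rw [this]
        simp only [hrdef, if_pos rfl]
        exact (hhull hz).2.2
      · simp only [hrdef, if_neg h]
        calc |⟪u i, z - x 0⟫| ≤ ‖u i‖ * ‖z - x 0‖ := abs_real_inner_le_norm _ _
          _ = ‖z - x 0‖ := by rw [hu.1 i, one_mul]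
          _ ≤ d := (hhull hz).2.1)
  have hcast : ((m:ℝ)+1) = (((m+1):ℕ):ℝ) := by push_cast; ring
  rw [hcast]
  refine le_trans hbb (le_of_eq ?_)
  congr 1
  have hprod : ∏ i, (2 * r i) = (2*d)^m * (2*δ) := by
    rw [Fin.prod_univ_castSucc]
    have h1 : ∀ i : Fin m, r i.castSucc = d := fun i => by
      rw [hrdef]
      simp only [if_neg (Fin.castSucc_lt_last i).ne]
    have h2 : r (Fin.last m) = δ := by rw [hrdef]; simp
    rw [h2]
    congr 1
    calc ∏ i : Fin m, 2 * r i.castSucc = ∏ _i : Fin m, (2*d) := by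
          refine Finset.prod_congr rfl fun i _ => by rw [h1]
      _ = (2*d)^m := by rw [Finset.prod_const]; simp
  rw [hprod]
  try push_cast
  try ring

/-- a linear bound on β-numbers implies a uniform curvature bound
and finiteness of the p-energy for every `p > 0`. -/
theorem statement10 (n m : ℕ) (hm : 0 < m) (hmn : m < n)
    (S : Set (Euc n)) (hcpt : IsCompact S) (hfin : μH[(m : ℝ)] S < ⊤)
    (hβ : ∃ R > (0:ℝ), ∃ C > (0:ℝ), ∀ x ∈ S, ∀ r : ℝ, 0 < r → r ≤ R →
      betaBar m S x r ≤ C * r) :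
    (∃ B : ℝ, ∀ x : Fin (m+2) → Euc n, (∀ i, x i ∈ S) → discCurv m x ≤ B) ∧
    (∀ p : ℝ, 0 < p → energy m p S < ⊤) := by
  obtain ⟨R, hR, C, hC, hβ⟩ := hβ
  obtain ⟨H₀, -, hH₀⟩ := exists_superspace (⊥ : Submodule ℝ (Euc n)) m (by simp) hmn.le
  haveI hNE : Nonempty {H : Submodule ℝ (Euc n) // Module.finrank ℝ H = m} := ⟨⟨H₀, hH₀⟩⟩
  set c₁ : ℝ := ((m:ℝ)+1)^(m+1) * (2^m * (4*C)) with hc₁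
  set c₂ : ℝ := ((m:ℝ)+1)^(m+1) * 2^(m+1) with hc₂
  set B : ℝ := max c₁ (c₂ / R) with hB
  have hc₁0 : 0 ≤ c₁ := by
    apply mul_nonneg (by positivity)
    apply mul_nonneg (by positivity)
    linarith
  have hB0 : 0 ≤ B := le_trans hc₁0 (le_max_left _ _)
  have hcurv : ∀ x : Fin (m+2) → Euc n, (∀ i, x i ∈ S) → discCurv m x ≤ B := by
    intro x hx
    rw [discCurv]
    set d := Metric.diam (Set.range x) with hd
    have hd0 : 0 ≤ d := Metric.diam_nonneg
    rcases eq_or_lt_of_le hd0 with hdz | hdpos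
    · rw [← hdz, zero_pow (by omega), div_zero]
      exact hB0
    · have hbd : Bornology.IsBounded (Set.range x) := (Set.finite_range x).isBounded
      have hdist : ∀ i, ‖x i - x 0‖ ≤ d := fun i => by
        rw [← dist_eq_norm]
        exact Metric.dist_le_diam_of_mem hbd (Set.mem_range_self i) (Set.mem_range_self 0)
      by_cases hdR : d ≤ R
      · -- small diameter : use the β-number bound
        have hβd := hβ (x 0) (hx 0) d hdpos hdR
        rw [betaBar] at hβd
        set I := ⨅ H : {H : Submodule ℝ (Euc n) // Module.finrank ℝ H = m},
          ⨆ z : ↥(S ∩ Metric.closedBall (x 0) d), ‖QCLM H.1 ((z : Euc n) - x 0)‖ with hI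
        have hImul := mul_le_mul_of_nonneg_left hβd hd0
        have hI1 : d * ((1/d) * I) = I := by field_simp
        rw [hI1] at hImul
        have hCd : 0 < C * d^2 := mul_pos hC (pow_pos hdpos 2)
        have hIlt : I < 2*C*d^2 := by nlinarith
        obtain ⟨⟨H, hHr⟩, hHlt⟩ := exists_lt_of_ciInf_lt hIlt
        have hbdd : BddAbove (Set.range fun z : ↥(S ∩ Metric.closedBall (x 0) d) =>
            ‖QCLM H ((z : Euc n) - x 0)‖) := by
          refine ⟨d, ?_⟩
          rintro - ⟨z, rfl⟩
          refine le_trans (norm_QCLM_le _ _) ?_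
          rw [← dist_eq_norm]
          exact z.2.2
        have hQ : ∀ i, ‖QCLM H (x i - x 0)‖ ≤ 2*C*d^2 := by
          intro i
          have hmem : x i ∈ S ∩ Metric.closedBall (x 0) d :=
            ⟨hx i, by rw [Metric.mem_closedBall, dist_eq_norm]; exact hdist i⟩
          exact le_trans (le_ciSup hbdd ⟨x i, hmem⟩) hHlt.le
        have hδ0 : 0 ≤ 2*C*d^2 := by nlinarith
        have hhb := hull_bound hmn x d (2*C*d^2) hd0 hδ0 H hHr hdist hQ
        have hnn : 0 ≤ ((m:ℝ)+1)^(m+1) * ((2*d)^m * (2*(2*C*d^2))) := by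
          apply mul_nonneg (by positivity)
          apply mul_nonneg (by positivity)
          linarith
        have htr := ENNReal.toReal_le_of_le_ofReal hnn hhb
        have hstep : ((m:ℝ)+1)^(m+1) * ((2*d)^m * (2*(2*C*d^2))) = c₁ * d^(m+2) := by
          rw [hc₁]; ring
        rw [hstep] at htr
        calc (μH[((m:ℝ)+1)] (convexHull ℝ (Set.range x))).toReal / d^(m+2)
            ≤ (c₁ * d^(m+2)) / d^(m+2) := by gcongr
          _ = c₁ := by field_simp
          _ ≤ B := le_max_left _ _
      · -- large diameter
        push_neg at hdR
        have hQ' : ∀ i, ‖QCLM H₀ (x i - x 0)‖ ≤ d := fun i =>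
          le_trans (norm_QCLM_le _ _) (hdist i)
        have hhb := hull_bound hmn x d d hd0 hd0 H₀ hH₀ hdist hQ'
        have hnn : 0 ≤ ((m:ℝ)+1)^(m+1) * ((2*d)^m * (2*d)) := by positivity
        have htr := ENNReal.toReal_le_of_le_ofReal hnn hhb
        have hstep : ((m:ℝ)+1)^(m+1) * ((2*d)^m * (2*d)) = c₂ * d^(m+1) := by
          rw [hc₂]; ring
        rw [hstep] at htr
        have hdne : d ≠ 0 := ne_of_gt hdpos
        calc (μH[((m:ℝ)+1)] (convexHull ℝ (Set.range x))).toReal / d^(m+2)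
            ≤ (c₂ * d^(m+1)) / d^(m+2) := by gcongr
          _ = c₂ / d := by rw [pow_succ]; field_simp; ring
          _ ≤ c₂ / R := by
              apply div_le_div_of_nonneg_left (by positivity) hR hdR.le
          _ ≤ B := le_max_right _ _
  refine ⟨⟨B, hcurv⟩, ?_⟩
  intro p hp
  have hms : MeasurableSet S := hcpt.isClosed.measurableSet
  set c : ℝ≥0∞ := ENNReal.ofReal (B ^ p) with hcdef
  have hbound : ∀ v : Fin (m+2) → Euc n, (∀ i, v i ∈ S) →
      ENNReal.ofReal (discCurv m v ^ p) ≤ c := by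
    intro v hv
    apply ENNReal.ofReal_le_ofReal
    apply Real.rpow_le_rpow ?_ (hcurv v hv) hp.le
    rw [discCurv]
    positivity
  have hmulti : ∀ (k : ℕ) (f : (Fin k → Euc n) → ℝ≥0∞),
      (∀ v, (∀ i, v i ∈ S) → f v ≤ c) →
      multiLIntegral ((μH[(m:ℝ)]).restrict S) k f ≤ c * (μH[(m:ℝ)] S)^k := by
    intro k
    induction k with
    | zero =>
      intro f hf
      simpa [multiLIntegral] using hf Fin.elim0 (fun i => i.elim0)
    | succ k ih =>
      intro f hf
      rw [multiLIntegral]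
      calc ∫⁻ y, multiLIntegral ((μH[(m:ℝ)]).restrict S) k (fun v => f (Fin.cons y v))
            ∂((μH[(m:ℝ)]).restrict S)
          ≤ ∫⁻ _y, c * (μH[(m:ℝ)] S)^k ∂((μH[(m:ℝ)]).restrict S) := by
            apply lintegral_mono_ae
            filter_upwards [ae_restrict_mem hms] with y hy
            apply ih
            intro v hv
            apply hf
            intro i
            induction i using Fin.cases with
            | zero => simpa using hy
            | succ j => simpa using hv j
        _ = c * (μH[(m:ℝ)] S)^k * ((μH[(m:ℝ)]).restrict S Set.univ) := lintegral_const _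
        _ = c * (μH[(m:ℝ)] S)^(k+1) := by rw [Measure.restrict_apply_univ]; ring
  have hfinal := hmulti (m+2) _ hbound
  rw [energy]
  refine lt_of_le_of_lt hfinal ?_
  exact ENNReal.mul_lt_top ENNReal.ofReal_lt_top (ENNReal.pow_lt_top hfin)
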